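/- Let f₁ : ℝ^n → ℝ∪{+∞} be convex proper lsc, x ∈ dom(f₁), α > 0 with α ≤ α_max, and D symmetric positive definite with eigenvalues in [1/μ, μ], μ ≥ 1. Set z = x − αD⁻¹∇f₀(x), h̃(w) = ∇f₀(x)ᵀ(w−x) + (γ/(2α))‖w−x‖²_D + f₁(w) − f₁(x) with γ ∈ [0,1]. If ỹ satisfies (1/α)D(z − ỹ) ∈ ∂_ε f₁(ỹ) for some ε ≥ 0, then (1/(2α_max μ))‖ỹ − x‖² ≤ −h̃(ỹ) + ε. -/

import Mathlib

open Matrix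

/-- The ε-subdifferential of an extended-real-valued convex function. -/
def epsSubdiff {n : ℕ} (f : (Fin n → ℝ) → EReal) (ε : ℝ) (u : Fin n → ℝ) :
    Set (Fin n → ℝ) :=
  {w | ∀ v : Fin n → ℝ, f u + ((w ⬝ᵥ (v - u) : ℝ) : EReal) - (ε : EReal) ≤ f v}

theorem stmt_15 (n : ℕ) (f₀ : (Fin n → ℝ) → ℝ) (hf₀ : Differentiable ℝ f₀)
    (f₁ : (Fin n → ℝ) → EReal)
    (hconv : ∀ u v : Fin n → ℝ, ∀ a b : ℝ, 0 ≤ a → 0 ≤ b → a + b = 1 →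
      f₁ (a • u + b • v) ≤ (a : EReal) * f₁ u + (b : EReal) * f₁ v)
    (hproper : ∃ u, f₁ u ≠ ⊤) (hbot : ∀ u, f₁ u ≠ ⊥) (hlsc : LowerSemicontinuous f₁)
    (x : Fin n → ℝ) (hx : f₁ x ≠ ⊤)
    (α αmax : ℝ) (hα : 0 < α) (hαmax : α ≤ αmax)
    (μ : ℝ) (hμ : 1 ≤ μ)
    (D : Matrix (Fin n) (Fin n) ℝ) (hDsym : D.IsSymm) (hDpd : D.PosDef)
    (heig : ∀ w : Fin n → ℝ,
      (1 / μ) * (w ⬝ᵥ w) ≤ w ⬝ᵥ (D *ᵥ w) ∧ w ⬝ᵥ (D *ᵥ w) ≤ μ * (w ⬝ᵥ w))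
    (g : Fin n → ℝ)
    (hg : ∀ d : Fin n → ℝ, HasDerivAt (fun t : ℝ => f₀ (x + t • d)) (g ⬝ᵥ d) 0)
    (γ : ℝ) (hγ : γ ∈ Set.Icc (0 : ℝ) 1)
    (ε : ℝ) (hε : 0 ≤ ε) (ty : Fin n → ℝ)
    (hty : α⁻¹ • (D *ᵥ ((x - α • (D⁻¹ *ᵥ g)) - ty)) ∈ epsSubdiff f₁ ε ty) :
    ((1 / (2 * αmax * μ) * ((ty - x) ⬝ᵥ (ty - x)) : ℝ) : EReal) ≤
      -(((g ⬝ᵥ (ty - x) + γ / (2 * α) * ((ty - x) ⬝ᵥ (D *ᵥ (ty - x))) : ℝ) : EReal)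
          + f₁ ty - f₁ x) + (ε : EReal) := by
  have hμ0 : (0:ℝ) < μ := lt_of_lt_of_le one_pos hμ
  have hαmax0 : (0:ℝ) < αmax := lt_of_lt_of_le hα hαmax
  set d : Fin n → ℝ := ty - x with hd
  set S : ℝ := d ⬝ᵥ d with hSdef
  set Q : ℝ := d ⬝ᵥ (D *ᵥ d) with hQdef
  set G : ℝ := g ⬝ᵥ d with hGdef
  have hS0 : 0 ≤ S := Finset.sum_nonneg fun i _ => mul_self_nonneg _
  have hQ1 : (1 / μ) * S ≤ Q := (heig d).1
  have hQ0 : 0 ≤ Q := le_trans (by positivity) hQ1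
  have hsymm : ∀ u v : Fin n → ℝ, (D *ᵥ u) ⬝ᵥ v = u ⬝ᵥ (D *ᵥ v) := by
    intro u v
    rw [dotProduct_mulVec, ← mulVec_transpose, hDsym.eq, dotProduct_comm]
  have hinv : D *ᵥ (α • (D⁻¹ *ᵥ g)) = α • g := by
    rw [Matrix.mulVec_smul, Matrix.mulVec_mulVec,
      Matrix.mul_nonsing_inv _ (isUnit_iff_ne_zero.mpr hDpd.det_pos.ne'),
      Matrix.one_mulVec]
  -- the dot product appearing in the subgradient inequality at v = x
  have hw : (α⁻¹ • (D *ᵥ ((x - α • (D⁻¹ *ᵥ g)) - ty))) ⬝ᵥ (x - ty)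
      = α⁻¹ * Q + G := by
    have h0 : (x - α • (D⁻¹ *ᵥ g)) - ty = (x - ty) - α • (D⁻¹ *ᵥ g) := by
      abel
    have hxy : x - ty = -d := by rw [hd]; abel
    rw [smul_dotProduct, h0, Matrix.mulVec_sub, hinv, sub_dotProduct, hxy,
      Matrix.mulVec_neg, neg_dotProduct, dotProduct_neg, neg_neg, smul_dotProduct,
      hsymm, dotProduct_neg, ← hQdef, ← hGdef]
    field_simp
    linear_combination (Q + α * G) * mul_inv_cancel₀ hα.ne'
  have key := hty x
  rw [hw] at key
  have httop : f₁ ty ≠ ⊤ := by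
    intro h
    rw [h] at key
    simp only [EReal.top_add_coe, EReal.top_sub_coe, top_le_iff] at key
    exact hx key
  obtain ⟨a, ha⟩ : ∃ a : ℝ, f₁ ty = (a : EReal) :=
    ⟨(f₁ ty).toReal, (EReal.coe_toReal httop (hbot ty)).symm⟩
  obtain ⟨b, hb⟩ : ∃ b : ℝ, f₁ x = (b : EReal) :=
    ⟨(f₁ x).toReal, (EReal.coe_toReal hx (hbot x)).symm⟩
  rw [ha, hb] at key ⊢
  rw [show ((a:EReal) + ((α⁻¹ * Q + G : ℝ) : EReal) - (ε : EReal))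
      = ((a + (α⁻¹ * Q + G) - ε : ℝ) : EReal) from by push_cast; ring] at key
  rw [show (-(((G + γ / (2 * α) * Q : ℝ) : EReal) + (a : EReal) - (b : EReal)) + (ε : EReal))
      = ((-(G + γ / (2 * α) * Q + a - b) + ε : ℝ) : EReal) from by push_cast; ring]
  rw [EReal.coe_le_coe_iff] at key ⊢
  -- now a purely real inequality
  have h1 : 1 / (2 * αmax * μ) * S ≤ 1 / (2 * α * μ) * S := by
    apply mul_le_mul_of_nonneg_right _ hS0
    apply one_div_le_one_div_of_le (by positivity)
    nlinarith
  have h2 : 1 / (2 * α * μ) * S ≤ 1 / (2 * α) * Q := by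
    have he : 1 / (2 * α * μ) * S = 1 / (2 * α) * (1 / μ * S) := by
      field_simp
    rw [he]
    exact mul_le_mul_of_nonneg_left hQ1 (by positivity)
  have h3 : 1 / (2 * α) * Q ≤ (α⁻¹ - γ / (2 * α)) * Q := by
    apply mul_le_mul_of_nonneg_right _ hQ0
    have he : α⁻¹ - γ / (2 * α) - 1 / (2 * α) = (1 - γ) / (2 * α) := by
      field_simp; ring
    have hp : 0 ≤ (1 - γ) / (2 * α) := div_nonneg (by linarith [hγ.2]) (by linarith)
    linarith
  rw [sub_mul] at h3
  linarith
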